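/- The hypergraph of the maximal contraction of any full acyclic conjunctive query Q with α_free(Q) < 3 and mh(Q) > 2 contains a chordless path of four vertices. -/

import Mathlib

/-- Two vertices are neighbors in a hypergraph if some hyperedge contains both. -/
def Nbr {V : Type*} (E : Finset (Finset V)) (x y : V) : Prop :=
  ∃ e ∈ E, x ∈ e ∧ y ∈ e

/-- Join tree: a tree on the hyperedges with the running intersection property. -/
def IsJoinTreeOf {V ι : Type*} (T : SimpleGraph ι) (lab : ι → Finset V)
    (E : Finset (Finset V)) : Prop :=
  T.IsTree ∧ (∀ i, lab i ∈ E) ∧ (∀ e ∈ E, ∃ i, lab i = e) ∧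
    ∀ v : V, (T.induce {i | v ∈ lab i}).Preconnected

/-- A hypergraph is acyclic if it admits a join tree. -/
def HGAcyclic {V : Type*} (E : Finset (Finset V)) : Prop :=
  ∃ (ι : Type) (T : SimpleGraph ι) (lab : ι → Finset V), IsJoinTreeOf T lab E

/-- The maximal hyperedges of a hypergraph (w.r.t. strict containment). -/
def maximalEdges {V : Type*} [DecidableEq V] (E : Finset (Finset V)) :
    Finset (Finset V) :=
  E.filter fun e => ∀ e' ∈ E, ¬ e ⊂ e'

/-- A chordless path of four (distinct) vertices: consecutive vertices are
neighbors, non-consecutive vertices are not. -/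
def ChordlessPath4 {V : Type*} (E : Finset (Finset V)) (a b c d : V) : Prop :=
  a ≠ b ∧ a ≠ c ∧ a ≠ d ∧ b ≠ c ∧ b ≠ d ∧ c ≠ d ∧
  Nbr E a b ∧ Nbr E b c ∧ Nbr E c d ∧
  ¬ Nbr E a c ∧ ¬ Nbr E a d ∧ ¬ Nbr E b d

/-- One contraction step of a full CQ (viewed as a hypergraph): remove an absorbed
atom (a hyperedge contained in another one), or remove an absorbed variable
(a variable `v` that appears in exactly the same hyperedges as another variable
`u`). -/
inductive ContractStep {V : Type*} [DecidableEq V] :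
    Finset (Finset V) → Finset (Finset V) → Prop
  | atom (E : Finset (Finset V)) (e e' : Finset V) :
      e ∈ E → e' ∈ E → e ≠ e' → e ⊆ e' → ContractStep E (E.erase e)
  | var (E : Finset (Finset V)) (u v : V) :
      u ≠ v → (∃ e ∈ E, v ∈ e) → (∀ e ∈ E, v ∈ e ↔ u ∈ e) →
      ContractStep E (E.image fun e => e.erase v)

/-! ### Tree combinatorics -/

open SimpleGraph

set_option linter.unusedSectionVars false

section Tree

variable {ι : Type*} [DecidableEq ι] {T : SimpleGraph ι}

/-- A set of tree nodes closed under supports of paths between its members. -/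
def PathClosed (T : SimpleGraph ι) (S : Set ι) : Prop :=
  ∀ ⦃x y : ι⦄, x ∈ S → y ∈ S → ∀ p : T.Walk x y, p.IsPath → ∀ z ∈ p.support, z ∈ S

lemma exists_isPath (hT : T.IsTree) (x y : ι) : ∃ p : T.Walk x y, p.IsPath :=
  (hT.isConnected.preconnected x y).elim fun w => ⟨w.bypass, w.bypass_isPath⟩

lemma support_unique (hT : T.IsTree) {x y : ι} (p q : T.Walk x y)
    (hp : p.IsPath) (hq : q.IsPath) : p.support = q.support := by
  have := hT.IsAcyclic.path_unique ⟨p, hp⟩ ⟨q, hq⟩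
  exact congrArg (fun r : T.Path x y => r.1.support) this

lemma pathClosed_inter {A B : Set ι} (hA : PathClosed T A) (hB : PathClosed T B) :
    PathClosed T (A ∩ B) := fun _ _ hx hy p hp z hz =>
  ⟨hA hx.1 hy.1 p hp z hz, hB hx.2 hy.2 p hp z hz⟩

lemma pathClosed_union (hT : T.IsTree) {A B : Set ι} (hA : PathClosed T A)
    (hB : PathClosed T B) {w : ι} (hwA : w ∈ A) (hwB : w ∈ B) :
    PathClosed T (A ∪ B) := by
  have key : ∀ x y, x ∈ A → y ∈ B → ∀ p : T.Walk x y, p.IsPath →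
      ∀ z ∈ p.support, z ∈ A ∪ B := by
    intro x y hx hy p hp z hz
    obtain ⟨q1, hq1⟩ := exists_isPath hT x w
    obtain ⟨q2, hq2⟩ := exists_isPath hT w y
    have hs : p.support = (q1.append q2).bypass.support :=
      support_unique hT _ _ hp ((q1.append q2).bypass_isPath)
    rw [hs] at hz
    have hz' := (q1.append q2).support_bypass_subset hz
    rw [Walk.mem_support_append_iff] at hz'
    rcases hz' with h | h
    · exact Or.inl (hA hx hwA q1 hq1 z h)
    · exact Or.inr (hB hwB hy q2 hq2 z h)
  intro x y hx hy p hp z hz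
  rcases hx with hx | hx <;> rcases hy with hy | hy
  · exact Or.inl (hA hx hy p hp z hz)
  · exact key x y hx hy p hp z hz
  · have := key y x hy hx p.reverse hp.reverse z (by simpa using hz)
    tauto
  · exact Or.inr (hB hx hy p hp z hz)

/-- Along a path ending in `Cs`, there is a first vertex of `Cs`. -/
lemma exists_first (Cs : Set ι) : ∀ {x y : ι} (p : T.Walk x y), p.IsPath → y ∈ Cs →
    ∃ (m : ι) (p1 : T.Walk x m), p1.IsPath ∧ m ∈ Cs ∧
      (∀ z ∈ p1.support, z ∈ Cs → z = m) ∧ (∀ z ∈ p1.support, z ∈ p.support) := by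
  intro x y p
  induction p with
  | nil =>
    intro _ hy
    exact ⟨_, Walk.nil, Walk.IsPath.nil, hy, by simp, by simp⟩
  | @cons u v w hadj q ih =>
    intro hp hy
    by_cases hxC : u ∈ Cs
    · exact ⟨u, Walk.nil, Walk.IsPath.nil, hxC, by simp, by simp⟩
    · obtain ⟨m, p1, hp1, hm, hfirst, hsub⟩ := ih hp.of_cons hy
      refine ⟨m, Walk.cons hadj p1, hp1.cons ?_, hm, ?_, ?_⟩
      · intro hmem
        exact (Walk.cons_isPath_iff hadj q |>.mp hp).2 (hsub _ hmem)
      · intro z hz hzC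
        rw [Walk.support_cons] at hz
        rcases List.mem_cons.mp hz with rfl | hz'
        · exact absurd hzC hxC
        · exact hfirst z hz' hzC
      · intro z hz
        rw [Walk.support_cons] at hz ⊢
        rcases List.mem_cons.mp hz with rfl | hz'
        · exact List.mem_cons_self
        · exact List.mem_cons_of_mem _ (hsub z hz')

lemma helly3 (hT : T.IsTree) {A B C : Set ι} (hA : PathClosed T A)
    (hB : PathClosed T B) (hC : PathClosed T C) {x y z : ι}
    (hxA : x ∈ A) (hxB : x ∈ B) (hyB : y ∈ B) (hyC : y ∈ C)
    (hzA : z ∈ A) (hzC : z ∈ C) : ∃ m, m ∈ A ∧ m ∈ B ∧ m ∈ C := by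
  obtain ⟨p, hp⟩ := exists_isPath hT x y
  have hpB : ∀ w ∈ p.support, w ∈ B := hB hxB hyB p hp
  obtain ⟨m, p1, hp1, hmC, hfirst, hsub⟩ := exists_first C p hp hyC
  have hmB : m ∈ B := hpB m (hsub m p1.end_mem_support)
  obtain ⟨p2, hp2⟩ := exists_isPath hT m z
  have hp2C : ∀ w ∈ p2.support, w ∈ C := hC hmC hzC p2 hp2
  have hmnt : m ∉ p2.support.tail := by
    have := hp2.support_nodup
    rw [p2.support_eq_cons] at this
    exact (List.nodup_cons.mp this).1
  have happ : (p1.append p2).IsPath := by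
    rw [Walk.isPath_def, Walk.support_append]
    refine List.Nodup.append hp1.support_nodup ?_ ?_
    · have := hp2.support_nodup
      rw [p2.support_eq_cons] at this
      exact (List.nodup_cons.mp this).2
    · intro a ha ha'
      have haC : a ∈ C := hp2C a (List.mem_of_mem_tail ha')
      have : a = m := hfirst a ha haC
      subst this
      exact hmnt ha'
  have hXA : ∀ w ∈ (p1.append p2).support, w ∈ A := hA hxA hzA _ happ
  refine ⟨m, hXA m ?_, hmB, hmC⟩
  rw [Walk.mem_support_append_iff]
  exact Or.inl p1.end_mem_support

lemma helly_finset {α : Type*} [DecidableEq α] (hT : T.IsTree) (C : Finset α) :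
    ∀ S : α → Set ι, (∀ v ∈ C, PathClosed T (S v)) →
    (∀ u ∈ C, ∀ v ∈ C, (S u ∩ S v).Nonempty) → C.Nonempty →
    ∃ i, ∀ v ∈ C, i ∈ S v := by
  induction C using Finset.induction_on with
  | empty => intro S _ _ hne; exact absurd hne (by simp)
  | @insert a C' ha ih =>
    intro S hpc hint _
    rcases C'.eq_empty_or_nonempty with rfl | hne'
    · obtain ⟨i, hi⟩ := hint a (by simp) a (by simp)
      exact ⟨i, by simpa using hi.1⟩
    · obtain ⟨i, hi⟩ := ih (fun v => S v ∩ S a)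
        (fun v hv => pathClosed_inter (hpc v (by simp [hv])) (hpc a (by simp)))
        (fun u hu v hv => by
          obtain ⟨m, hmA, hmB, hmC⟩ := helly3 hT (hpc u (by simp [hu]))
            (hpc v (by simp [hv])) (hpc a (by simp))
            (hint u (by simp [hu]) v (by simp [hv])).choose_spec.1
            (hint u (by simp [hu]) v (by simp [hv])).choose_spec.2
            (hint v (by simp [hv]) a (by simp)).choose_spec.1
            (hint v (by simp [hv]) a (by simp)).choose_spec.2
            (hint u (by simp [hu]) a (by simp)).choose_spec.1
            (hint u (by simp [hu]) a (by simp)).choose_spec.2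
          exact ⟨m, ⟨hmA, hmC⟩, hmB, hmC⟩) hne'
      obtain ⟨v0, hv0⟩ := hne'
      refine ⟨i, fun v hv => ?_⟩
      rcases Finset.mem_insert.mp hv with rfl | hv'
      · exact (hi v0 hv0).2
      · exact (hi v hv').1

/-- lift a walk in the induced graph to a walk in `T` whose support stays in `S`. -/
lemma lift_walk {S : Set ι} : ∀ {a b : S} (w : (T.induce S).Walk a b),
    ∃ w' : T.Walk a.1 b.1, ∀ z ∈ w'.support, z ∈ S := by
  intro a b w
  induction w with
  | nil => exact ⟨Walk.nil, by simp⟩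
  | @cons u v _ h q ih =>
    obtain ⟨w', hw'⟩ := ih
    refine ⟨Walk.cons (by exact h) w', ?_⟩
    intro z hz
    change z ∈ (u : ι) :: w'.support at hz
    rcases List.mem_cons.mp hz with rfl | hz'
    · exact u.2
    · exact hw' z hz'

lemma pathClosed_of_preconnected (hT : T.IsTree) (S : Set ι)
    (h : (T.induce S).Preconnected) : PathClosed T S := by
  intro x y hx hy p hp z hz
  obtain ⟨w0⟩ := h ⟨x, hx⟩ ⟨y, hy⟩
  obtain ⟨w, hw⟩ := lift_walk w0
  have hs : p.support = w.bypass.support :=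
    support_unique hT _ _ hp w.bypass_isPath
  rw [hs] at hz
  exact hw z (w.support_bypass_subset hz)

end Tree

/-! ### Consequences of acyclicity -/

section Acyclic

variable {V : Type*} [DecidableEq V]

/-- Conformality: every nonempty clique of the primal graph is inside an edge. -/
def ConformalHG (E : Finset (Finset V)) : Prop :=
  ∀ C : Finset V, C.Nonempty → (∀ x ∈ C, ∀ y ∈ C, Nbr E x y) → ∃ e ∈ E, C ⊆ e

/-- No chordless 4-cycle in the primal graph. -/
def NoC4 (E : Finset (Finset V)) : Prop :=
  ∀ a b c d : V, Nbr E a b → Nbr E b c → Nbr E c d → Nbr E d a →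
    ¬ Nbr E a c → ¬ Nbr E b d → False

lemma conformal_of_acyclic {E : Finset (Finset V)} (h : HGAcyclic E) :
    ConformalHG E := by
  classical
  obtain ⟨ι, T, lab, hT, hmem, hsurj, hconn⟩ := h
  haveI := Classical.decEq ι
  intro C hCne hclique
  have hpc : ∀ v ∈ C, PathClosed T {i | v ∈ lab i} := fun v _ =>
    pathClosed_of_preconnected hT _ (hconn v)
  have hint : ∀ u ∈ C, ∀ v ∈ C, ({i | u ∈ lab i} ∩ {i | v ∈ lab i}).Nonempty := by
    intro u hu v hv
    obtain ⟨e, he, hue, hve⟩ := hclique u hu v hv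
    obtain ⟨i, rfl⟩ := hsurj e he
    exact ⟨i, hue, hve⟩
  obtain ⟨i, hi⟩ := helly_finset hT C (fun v => {i | v ∈ lab i}) hpc hint hCne
  exact ⟨lab i, hmem i, fun v hv => hi v hv⟩

lemma noC4_of_acyclic {E : Finset (Finset V)} (h : HGAcyclic E) : NoC4 E := by
  classical
  obtain ⟨ι, T, lab, hT, hmem, hsurj, hconn⟩ := h
  haveI := Classical.decEq ι
  intro a b c d hab hbc hcd hda hac hbd
  set A := {i | a ∈ lab i}
  set B := {i | b ∈ lab i}
  set C := {i | c ∈ lab i}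
  set D := {i | d ∈ lab i}
  have pcA : PathClosed T A := pathClosed_of_preconnected hT _ (hconn a)
  have pcB : PathClosed T B := pathClosed_of_preconnected hT _ (hconn b)
  have pcC : PathClosed T C := pathClosed_of_preconnected hT _ (hconn c)
  have pcD : PathClosed T D := pathClosed_of_preconnected hT _ (hconn d)
  have node : ∀ x y : V, Nbr E x y → ∃ i, x ∈ lab i ∧ y ∈ lab i := by
    intro x y ⟨e, he, hx, hy⟩
    obtain ⟨i, rfl⟩ := hsurj e he
    exact ⟨i, hx, hy⟩
  obtain ⟨i1, hi1A, hi1B⟩ := node a b hab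
  obtain ⟨i2, hi2B, hi2C⟩ := node b c hbc
  obtain ⟨i3, hi3C, hi3D⟩ := node c d hcd
  obtain ⟨i4, hi4D, hi4A⟩ := node d a hda
  have pcAB : PathClosed T (A ∪ B) := pathClosed_union hT pcA pcB hi1A hi1B
  obtain ⟨m, hmAB, hmC, hmD⟩ := helly3 hT pcAB pcC pcD
    (Or.inr hi2B) hi2C hi3C hi3D (Or.inl hi4A) hi4D
  rcases hmAB with hmA | hmB
  · exact hac ⟨lab m, hmem m, hmA, hmC⟩
  · exact hbd ⟨lab m, hmem m, hmB, hmD⟩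

end Acyclic

section Steps

variable {V : Type*} [DecidableEq V] {E E' : Finset (Finset V)}

lemma step_appears (h : ContractStep E E') {x : V} :
    (∃ e ∈ E', x ∈ e) → ∃ e ∈ E, x ∈ e := by
  cases h with
  | atom e e' he he' hne hsub =>
    rintro ⟨f, hf, hx⟩
    exact ⟨f, Finset.mem_of_mem_erase hf, hx⟩
  | var u v huv hv hcl =>
    rintro ⟨f, hf, hx⟩
    obtain ⟨g, hg, rfl⟩ := Finset.mem_image.mp hf
    exact ⟨g, hg, Finset.mem_of_mem_erase hx⟩

lemma step_nbr_mp (h : ContractStep E E') {x y : V} : Nbr E' x y → Nbr E x y := by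
  cases h with
  | atom e e' he he' hne hsub =>
    rintro ⟨f, hf, hx, hy⟩
    exact ⟨f, Finset.mem_of_mem_erase hf, hx, hy⟩
  | var u v huv hv hcl =>
    rintro ⟨f, hf, hx, hy⟩
    obtain ⟨g, hg, rfl⟩ := Finset.mem_image.mp hf
    exact ⟨g, hg, Finset.mem_of_mem_erase hx, Finset.mem_of_mem_erase hy⟩

lemma step_nbr_mpr (h : ContractStep E E') {x y : V}
    (hx : ∃ e ∈ E', x ∈ e) (hy : ∃ e ∈ E', y ∈ e) : Nbr E x y → Nbr E' x y := by
  cases h with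
  | atom e e' he he' hne hsub =>
    rintro ⟨f, hf, hxf, hyf⟩
    by_cases hfe : f = e
    · subst hfe
      exact ⟨e', Finset.mem_erase.mpr ⟨fun hh => hne hh.symm, he'⟩, hsub hxf, hsub hyf⟩
    · exact ⟨f, Finset.mem_erase.mpr ⟨hfe, hf⟩, hxf, hyf⟩
  | var u v huv hv hcl =>
    rintro ⟨f, hf, hxf, hyf⟩
    have hxv : x ≠ v := by
      obtain ⟨g, hg, hxg⟩ := hx
      obtain ⟨g0, -, rfl⟩ := Finset.mem_image.mp hg
      exact Finset.ne_of_mem_erase hxg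
    have hyv : y ≠ v := by
      obtain ⟨g, hg, hyg⟩ := hy
      obtain ⟨g0, -, rfl⟩ := Finset.mem_image.mp hg
      exact Finset.ne_of_mem_erase hyg
    exact ⟨f.erase v, Finset.mem_image_of_mem _ hf,
      Finset.mem_erase.mpr ⟨hxv, hxf⟩, Finset.mem_erase.mpr ⟨hyv, hyf⟩⟩

lemma step_conformal (h : ContractStep E E') (hc : ConformalHG E) : ConformalHG E' := by
  intro C hCne hclique
  have hclE : ∀ x ∈ C, ∀ y ∈ C, Nbr E x y := fun x hx y hy =>
    step_nbr_mp h (hclique x hx y hy)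
  obtain ⟨e, he, hCe⟩ := hc C hCne hclE
  cases h with
  | atom e0 e0' he0 he0' hne hsub =>
    by_cases hee : e = e0
    · subst hee
      exact ⟨e0', Finset.mem_erase.mpr ⟨fun hh => hne hh.symm, he0'⟩, hCe.trans hsub⟩
    · exact ⟨e, Finset.mem_erase.mpr ⟨hee, he⟩, hCe⟩
  | var u v huv hv hcl =>
    refine ⟨e.erase v, Finset.mem_image_of_mem _ he, fun x hx => ?_⟩
    have hxv : x ≠ v := by
      obtain ⟨f, hf, hxf, -⟩ := hclique x hx x hx
      obtain ⟨g, -, rfl⟩ := Finset.mem_image.mp hf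
      exact Finset.ne_of_mem_erase hxf
    exact Finset.mem_erase.mpr ⟨hxv, hCe hx⟩

lemma step_mh (h : ContractStep E E') :
    (maximalEdges E).card ≤ (maximalEdges E').card := by
  cases h with
  | atom e0 e0' he0 he0' hne hsub =>
    have hss : e0 ⊂ e0' := Finset.ssubset_iff_subset_ne.mpr ⟨hsub, hne⟩
    have : maximalEdges E = maximalEdges (E.erase e0) := by
      ext f
      simp only [maximalEdges, Finset.mem_filter]
      constructor
      · rintro ⟨hf, hmax⟩
        have hfe : f ≠ e0 := by
          rintro rfl
          exact hmax e0' he0' hss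
        exact ⟨Finset.mem_erase.mpr ⟨hfe, hf⟩,
          fun g hg => hmax g (Finset.mem_of_mem_erase hg)⟩
      · rintro ⟨hf, hmax⟩
        refine ⟨Finset.mem_of_mem_erase hf, fun g hg hfg => ?_⟩
        by_cases hge : g = e0
        · subst hge
          exact hmax e0' (Finset.mem_erase.mpr ⟨fun hh => hne hh.symm, he0'⟩)
            (hfg.trans_subset hsub)
        · exact hmax g (Finset.mem_erase.mpr ⟨hge, hg⟩) hfg
    rw [this]
  | var u v huv hv hcl =>
    apply Finset.card_le_card_of_injOn (fun e => e.erase v)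
    · -- maps maximal edges to maximal edges of the image
      intro e he
      obtain ⟨heE, hmax⟩ := Finset.mem_filter.mp he
      refine Finset.mem_filter.mpr ⟨Finset.mem_image_of_mem _ heE, ?_⟩
      intro g' hg' hss
      obtain ⟨f, hfE, rfl⟩ := Finset.mem_image.mp hg'
      have hef : e ⊆ f := by
        by_cases hvine : v ∈ e
        · have huine : u ∈ e := (hcl e heE).mp hvine
          have huin' : u ∈ f.erase v :=
            hss.subset (Finset.mem_erase.mpr ⟨huv, huine⟩)
          have hvinf : v ∈ f := (hcl f hfE).mpr (Finset.mem_of_mem_erase huin')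
          intro x hx
          by_cases hxv : x = v
          · subst hxv; exact hvinf
          · exact Finset.mem_of_mem_erase (hss.subset (Finset.mem_erase.mpr ⟨hxv, hx⟩))
        · intro x hx
          have hxv : x ≠ v := fun hh => hvine (hh ▸ hx)
          exact Finset.mem_of_mem_erase (hss.subset (Finset.mem_erase.mpr ⟨hxv, hx⟩))
      have : e = f := by
        by_contra hne
        exact hmax f hfE (Finset.ssubset_iff_subset_ne.mpr ⟨hef, hne⟩)
      subst this
      exact hss.ne rfl
    · -- injective on maximal edges
      intro e he f hf heq0
      have heq : e.erase v = f.erase v := heq0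
      simp only [maximalEdges, Finset.mem_coe, Finset.mem_filter] at he hf
      by_cases hve : v ∈ e <;> by_cases hvf : v ∈ f
      · have := congrArg (insert v) heq
        rwa [Finset.insert_erase hve, Finset.insert_erase hvf] at this
      · by_contra hne
        apply hf.2 e he.1
        refine Finset.ssubset_iff_subset_ne.mpr ⟨?_, fun hh => hne hh.symm⟩
        calc f = f.erase v := (Finset.erase_eq_of_notMem hvf).symm
        _ = e.erase v := heq.symm
        _ ⊆ e := Finset.erase_subset _ _
      · by_contra hne
        apply he.2 f hf.1
        refine Finset.ssubset_iff_subset_ne.mpr ⟨?_, hne⟩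
        calc e = e.erase v := (Finset.erase_eq_of_notMem hve).symm
        _ = f.erase v := heq
        _ ⊆ f := Finset.erase_subset _ _
      · rw [Finset.erase_eq_of_notMem hve, Finset.erase_eq_of_notMem hvf] at heq
        exact heq

lemma reach_appears {E Em : Finset (Finset V)}
    (hreach : Relation.ReflTransGen ContractStep E Em) :
    ∀ x : V, (∃ e ∈ Em, x ∈ e) → ∃ e ∈ E, x ∈ e := by
  induction hreach with
  | refl => exact fun x h => h
  | tail hsteps hstep ih => exact fun x h => ih x (step_appears hstep h)

lemma reach_nbr {E Em : Finset (Finset V)}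
    (hreach : Relation.ReflTransGen ContractStep E Em) :
    ∀ x y : V, (∃ e ∈ Em, x ∈ e) → (∃ e ∈ Em, y ∈ e) →
      (Nbr Em x y ↔ Nbr E x y) := by
  induction hreach with
  | refl => exact fun x y _ _ => Iff.rfl
  | tail hsteps hstep ih =>
    intro x y hx hy
    constructor
    · intro h
      exact (ih x y (step_appears hstep hx) (step_appears hstep hy)).mp
        (step_nbr_mp hstep h)
    · intro h
      exact step_nbr_mpr hstep hx hy
        ((ih x y (step_appears hstep hx) (step_appears hstep hy)).mpr h)

lemma reach_conformal {E Em : Finset (Finset V)}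
    (hreach : Relation.ReflTransGen ContractStep E Em) (h : ConformalHG E) :
    ConformalHG Em := by
  induction hreach with
  | refl => exact h
  | tail hsteps hstep ih => exact step_conformal hstep ih

lemma reach_mh {E Em : Finset (Finset V)}
    (hreach : Relation.ReflTransGen ContractStep E Em) :
    (maximalEdges E).card ≤ (maximalEdges Em).card := by
  induction hreach with
  | refl => exact le_rfl
  | tail hsteps hstep ih => exact ih.trans (step_mh hstep)

end Steps

section Key

variable {V : Type*} [DecidableEq V]

lemma nbr_symm {E : Finset (Finset V)} {x y : V} (h : Nbr E x y) : Nbr E y x := by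
  obtain ⟨e, he, hx, hy⟩ := h; exact ⟨e, he, hy, hx⟩

lemma key_lemma : ∀ (n : ℕ) (Em : Finset (Finset V)),
    (Em.biUnion id).card ≤ n →
    (∀ e ∈ Em, ∀ f ∈ Em, e ⊆ f → e = f) →
    ConformalHG Em →
    (∀ S : Finset V, (∀ v ∈ S, ∃ e ∈ Em, v ∈ e) →
      (∀ a ∈ S, ∀ b ∈ S, a ≠ b → ¬ Nbr Em a b) → S.card < 3) →
    NoC4 Em →
    (¬ ∃ a b c d : V, ChordlessPath4 Em a b c d) →
    Em.card ≤ 2 := by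
  intro n
  induction n with
  | zero =>
    intro Em hW _ _ _ _ _
    have hWe : Em.biUnion id = ∅ := Finset.card_eq_zero.mp (Nat.le_zero.mp hW)
    have : Em ⊆ {∅} := by
      intro e he
      have : e ⊆ Em.biUnion id := Finset.subset_biUnion_of_mem id he
      rw [hWe] at this
      simpa using Finset.subset_empty.mp this
    calc Em.card ≤ ({∅} : Finset (Finset V)).card := Finset.card_le_card this
    _ ≤ 2 := by simp
  | succ n ih =>
    intro Em hWn hanti hconf halpha hC4 hP4
    by_contra hcard'
    have hcard : 2 < Em.card := by omega
    classical
    set W : Finset V := Em.biUnion id with hWdef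
    have hWmem : ∀ x : V, x ∈ W ↔ ∃ e ∈ Em, x ∈ e := by
      intro x; simp [hWdef, Finset.mem_biUnion]
    have hedgeW : ∀ e ∈ Em, e ⊆ W := fun e he x hx => (hWmem x).mpr ⟨e, he, hx⟩
    have hNxx : ∀ x ∈ W, Nbr Em x x := by
      intro x hx
      obtain ⟨e, he, hxe⟩ := (hWmem x).mp hx
      exact ⟨e, he, hxe, hxe⟩
    -- W is nonempty
    have hWne : W.Nonempty := by
      obtain ⟨e, he, f, hf, hef⟩ := Finset.one_lt_card.mp (by omega : 1 < Em.card)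
      rcases e.eq_empty_or_nonempty with rfl | ⟨x, hx⟩
      · exact absurd (hanti _ he f hf (Finset.empty_subset f)) hef
      · exact ⟨x, (hWmem x).mpr ⟨e, he, hx⟩⟩
    have indep3 : ∀ p q r : V, p ∈ W → q ∈ W → r ∈ W → p ≠ q → p ≠ r → q ≠ r →
        ¬Nbr Em p q → ¬Nbr Em p r → ¬Nbr Em q r → False := by
      intro p q r hp hq hr hpq hpr hqr h1 h2 h3
      have hc3 : ({p, q, r} : Finset V).card = 3 :=
        Finset.card_eq_three.mpr ⟨p, q, r, hpq, hpr, hqr, rfl⟩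
      have := halpha {p, q, r}
        (by
          intro v hv
          simp only [Finset.mem_insert, Finset.mem_singleton] at hv
          rcases hv with rfl | rfl | rfl
          · exact (hWmem v).mp hp
          · exact (hWmem v).mp hq
          · exact (hWmem v).mp hr)
        (by
          intro a ha b hb hne
          simp only [Finset.mem_insert, Finset.mem_singleton] at ha hb
          rcases ha with rfl | rfl | rfl <;> rcases hb with rfl | rfl | rfl <;>
            first
              | exact absurd rfl hne
              | exact h1
              | exact h2
              | exact h3
              | exact fun h => h1 (nbr_symm h)
              | exact fun h => h2 (nbr_symm h)
              | exact fun h => h3 (nbr_symm h))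
      omega
    set N : V → Finset V := fun x => W.filter (fun y => Nbr Em x y) with hNdef
    have hNmem : ∀ x y : V, y ∈ N x ↔ y ∈ W ∧ Nbr Em x y := by
      intro x y; simp [hNdef]
    obtain ⟨u, huW, humax⟩ := W.exists_max_image (fun x => (N x).card) hWne
    have huNu : u ∈ N u := (hNmem u u).mpr ⟨huW, hNxx u huW⟩
    -- no edges between N u and its complement in W
    have hcross : ∀ a b : V, a ∈ N u → b ∈ W → b ∉ N u → ¬ Nbr Em a b := by
      intro a b haN hbW hbN hab
      have hbu : ¬ Nbr Em u b := fun h => hbN ((hNmem u b).mpr ⟨hbW, h⟩)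
      have hbnu : b ≠ u := fun h => hbu (h ▸ hNxx u huW)
      by_cases hau : a = u
      · exact hbu (hau ▸ hab)
      · have haW : a ∈ W := ((hNmem u a).mp haN).1
        have hua : Nbr Em u a := ((hNmem u a).mp haN).2
        have hsub : N u ⊆ N a := by
          intro c hc
          obtain ⟨hcW, huc⟩ := (hNmem u c).mp hc
          refine (hNmem a c).mpr ⟨hcW, ?_⟩
          by_cases hac : a = c
          · exact hac ▸ hNxx a haW
          by_cases hnac : Nbr Em a c
          · exact hnac
          have hcu : c ≠ u := by rintro rfl; exact hnac (nbr_symm hua)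
          have hbc' : b ≠ c := fun h => hbN (h ▸ hc)
          by_cases hbc : Nbr Em b c
          · exact absurd (hC4 a u c b (nbr_symm hua) huc (nbr_symm hbc)
              (nbr_symm hab) hnac hbu) id
          · exact absurd ⟨b, a, u, c,
              (fun h => hbN (h ▸ haN)), hbnu, hbc', hau, hac, (fun h => hcu h.symm),
              nbr_symm hab, nbr_symm hua, huc,
              (fun h => hbu (nbr_symm h)), hbc, hnac⟩ hP4
        have hbNa : b ∈ N a := (hNmem a b).mpr ⟨hbW, hab⟩
        have hlt : (N u).card < (N a).card :=
          Finset.card_lt_card ((Finset.ssubset_iff_of_subset hsub).mpr ⟨b, hbNa, hbN⟩)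
        exact absurd hlt (not_lt.mpr (humax a haW))
    by_cases hF : (W \ N u).Nonempty
    · -- two cliques, hence at most two edges: contradiction
      obtain ⟨b, hbF⟩ := hF
      obtain ⟨hbW, hbN⟩ := Finset.mem_sdiff.mp hbF
      have hNuclique : ∀ c ∈ N u, ∀ c' ∈ N u, Nbr Em c c' := by
        intro c hc c' hc'
        by_cases hcc : c = c'
        · exact hcc ▸ hNxx c ((hNmem u c).mp hc).1
        by_contra hncc
        exact indep3 c c' b ((hNmem u c).mp hc).1 ((hNmem u c').mp hc').1 hbW
          hcc (fun h => hbN (h ▸ hc)) (fun h => hbN (h ▸ hc')) hncc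
          (hcross c b hc hbW hbN) (hcross c' b hc' hbW hbN)
      have hFclique : ∀ f ∈ W \ N u, ∀ f' ∈ W \ N u, Nbr Em f f' := by
        intro f hf f' hf'
        obtain ⟨hfW, hfN⟩ := Finset.mem_sdiff.mp hf
        obtain ⟨hfW', hfN'⟩ := Finset.mem_sdiff.mp hf'
        by_cases hff : f = f'
        · exact hff ▸ hNxx f hfW
        by_contra hnff
        exact indep3 f f' u hfW hfW' huW hff
          (fun h => hfN (h ▸ huNu)) (fun h => hfN' (h ▸ huNu)) hnff
          (fun h => (hcross u f huNu hfW hfN) (nbr_symm h))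
          (fun h => (hcross u f' huNu hfW' hfN') (nbr_symm h))
      obtain ⟨e1, he1, hNe1⟩ := hconf (N u) ⟨u, huNu⟩ hNuclique
      have he1eq : e1 = N u := by
        apply Finset.Subset.antisymm _ hNe1
        intro x hx
        have hxW : x ∈ W := hedgeW e1 he1 hx
        exact (hNmem u x).mpr ⟨hxW, ⟨e1, he1, hNe1 huNu, hx⟩⟩
      obtain ⟨e2, he2, hFe2⟩ := hconf (W \ N u) ⟨b, hbF⟩ hFclique
      have he2eq : e2 = W \ N u := by
        apply Finset.Subset.antisymm _ hFe2
        intro x hx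
        have hxW : x ∈ W := hedgeW e2 he2 hx
        refine Finset.mem_sdiff.mpr ⟨hxW, fun hxN => ?_⟩
        exact hcross x b hxN hbW hbN ⟨e2, he2, hx, hFe2 hbF⟩
      have hsplit : ∀ e ∈ Em, e = e1 ∨ e = e2 := by
        intro e he
        by_cases hx : ∃ x ∈ e, x ∈ N u
        · obtain ⟨x, hxe, hxN⟩ := hx
          left
          apply hanti e he e1 he1
          rw [he1eq]
          intro y hy
          have hyW : y ∈ W := hedgeW e he hy
          by_contra hyN
          exact hcross x y hxN hyW hyN ⟨e, he, hxe, hy⟩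
        · right
          apply hanti e he e2 he2
          rw [he2eq]
          intro y hy
          exact Finset.mem_sdiff.mpr ⟨hedgeW e he hy, fun hyN => hx ⟨y, hy, hyN⟩⟩
      have : Em ⊆ {e1, e2} := by
        intro e he
        rcases hsplit e he with rfl | rfl <;> simp
      have := Finset.card_le_card this
      have : Em.card ≤ 2 := this.trans (Finset.card_insert_le _ _ |>.trans (by simp))
      omega
    · -- u is universal: recurse on Em with u erased everywhere
      have hall : ∀ x ∈ W, x ∈ N u := by
        intro x hx
        by_contra h
        exact hF ⟨x, Finset.mem_sdiff.mpr ⟨hx, h⟩⟩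
      have huin : ∀ e ∈ Em, u ∈ e := by
        intro e he
        have hclq : ∀ x ∈ insert u e, ∀ y ∈ insert u e, Nbr Em x y := by
          have hnu : ∀ y ∈ insert u e, Nbr Em u y := by
            intro y hy
            rcases Finset.mem_insert.mp hy with h | hy'
            · rw [h]; exact hNxx u huW
            · exact ((hNmem u y).mp (hall y (hedgeW e he hy'))).2
          intro x hx y hy
          rcases Finset.mem_insert.mp hx with h | hx'
          · rw [h]; exact hnu y hy
          rcases Finset.mem_insert.mp hy with h | hy'
          · rw [h]; exact nbr_symm (hnu x hx)
          · exact ⟨e, he, hx', hy'⟩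
        obtain ⟨f, hf, hsubf⟩ := hconf (insert u e) ⟨u, Finset.mem_insert_self u e⟩ hclq
        have hef : e = f := hanti e he f hf ((Finset.subset_insert u e).trans hsubf)
        rw [hef]
        exact hsubf (Finset.mem_insert_self u e)
      set Em' : Finset (Finset V) := Em.image (fun e => e.erase u) with hEm'def
      have happ' : ∀ x : V, (∃ e ∈ Em', x ∈ e) → x ≠ u ∧ x ∈ W := by
        rintro x ⟨f, hf, hxf⟩
        obtain ⟨g, hg, rfl⟩ := Finset.mem_image.mp hf
        exact ⟨Finset.ne_of_mem_erase hxf, hedgeW g hg (Finset.mem_of_mem_erase hxf)⟩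
      have hmp : ∀ {x y : V}, Nbr Em' x y → Nbr Em x y := by
        rintro x y ⟨f, hf, hx, hy⟩
        obtain ⟨g, hg, rfl⟩ := Finset.mem_image.mp hf
        exact ⟨g, hg, Finset.mem_of_mem_erase hx, Finset.mem_of_mem_erase hy⟩
      have hmpr : ∀ {x y : V}, x ≠ u → y ≠ u → Nbr Em x y → Nbr Em' x y := by
        rintro x y hxu hyu ⟨f, hf, hx, hy⟩
        exact ⟨f.erase u, Finset.mem_image_of_mem _ hf,
          Finset.mem_erase.mpr ⟨hxu, hx⟩, Finset.mem_erase.mpr ⟨hyu, hy⟩⟩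
      have happne : ∀ {x y : V}, Nbr Em' x y → x ≠ u ∧ y ≠ u := by
        rintro x y ⟨f, hf, hx, hy⟩
        exact ⟨(happ' x ⟨f, hf, hx⟩).1, (happ' y ⟨f, hf, hy⟩).1⟩
      have hcard' : Em'.card ≤ 2 := by
        apply ih Em'
        · -- vertex count dropped
          have hsub : Em'.biUnion id ⊆ W.erase u := by
            intro x hx
            rw [Finset.mem_biUnion] at hx
            obtain ⟨f, hf, hxf⟩ := hx
            obtain ⟨hxu, hxW⟩ := happ' x ⟨f, hf, hxf⟩
            exact Finset.mem_erase.mpr ⟨hxu, hxW⟩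
          have := Finset.card_le_card hsub
          rw [Finset.card_erase_of_mem huW] at this
          omega
        · -- antichain
          intro e' he' f' hf' hsub'
          obtain ⟨e, he, rfl⟩ := Finset.mem_image.mp he'
          obtain ⟨f, hf, rfl⟩ := Finset.mem_image.mp hf'
          have hef : e ⊆ f := by
            intro x hx
            by_cases hxu : x = u
            · exact hxu ▸ huin f hf
            · exact Finset.mem_of_mem_erase (hsub' (Finset.mem_erase.mpr ⟨hxu, hx⟩))
          rw [hanti e he f hf hef]
        · -- conformal
          intro C hCne hclq
          have : ∀ x ∈ C, ∀ y ∈ C, Nbr Em x y := fun x hx y hy => hmp (hclq x hx y hy)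
          obtain ⟨e, he, hCe⟩ := hconf C hCne this
          refine ⟨e.erase u, Finset.mem_image_of_mem _ he, fun x hx => ?_⟩
          exact Finset.mem_erase.mpr ⟨(happne (hclq x hx x hx)).1, hCe hx⟩
        · -- alpha
          intro S hSapp hSind
          apply halpha S
          · intro v hv
            obtain ⟨-, hvW⟩ := happ' v (hSapp v hv)
            exact (hWmem v).mp hvW
          · intro a ha b hb hab hN
            have hau := (happ' a (hSapp a ha)).1
            have hbu := (happ' b (hSapp b hb)).1
            exact hSind a ha b hb hab (hmpr hau hbu hN)
        · -- NoC4
          intro a b c d h1 h2 h3 h4 h5 h6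
          have hau := (happne h1).1
          have hbu := (happne h1).2
          have hcu := (happne h2).2
          have hdu := (happne h3).2
          exact hC4 a b c d (hmp h1) (hmp h2) (hmp h3) (hmp h4)
            (fun h => h5 (hmpr hau hcu h)) (fun h => h6 (hmpr hbu hdu h))
        · -- no P4
          rintro ⟨a, b, c, d, n1, n2, n3, n4, n5, n6, h1, h2, h3, h4, h5, h6⟩
          have hau := (happne h1).1
          have hbu := (happne h1).2
          have hcu := (happne h2).2
          have hdu := (happne h3).2
          exact hP4 ⟨a, b, c, d, n1, n2, n3, n4, n5, n6, hmp h1, hmp h2, hmp h3,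
            (fun h => h4 (hmpr hau hcu h)), (fun h => h5 (hmpr hau hdu h)),
            (fun h => h6 (hmpr hbu hdu h))⟩
      have hinj : Em.card = Em'.card := by
        rw [hEm'def]
        rw [Finset.card_image_of_injOn]
        intro e he f hf heq
        have heq' : e.erase u = f.erase u := heq
        have := congrArg (insert u) heq'
        rwa [Finset.insert_erase (huin e he), Finset.insert_erase (huin f hf)] at this
      omega

end Key


/-! ### Main theorem -/

/-- The hypergraph `Em` of a maximal contraction of any full
acyclic CQ `E` with `α_free(Q) < 3` and more than two maximal hyperedges contains
a chordless path of four vertices. -/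
theorem maximal_contraction_has_chordless_four_path {V : Type*} [DecidableEq V]
    (E Em : Finset (Finset V))
    (hacyc : HGAcyclic E)
    (halpha : ∀ S : Finset V, (∀ v ∈ S, ∃ e ∈ E, v ∈ e) →
        (∀ a ∈ S, ∀ b ∈ S, a ≠ b → ¬ Nbr E a b) → S.card < 3)
    (hmh : 2 < (maximalEdges E).card)
    (hreach : Relation.ReflTransGen ContractStep E Em)
    (hmax : ∀ E', ¬ ContractStep Em E') :
    ∃ a b c d : V, ChordlessPath4 Em a b c d := by
  classical
  by_contra hP4
  -- transport facts along the contraction sequence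
  have happ : ∀ x : V, (∃ e ∈ Em, x ∈ e) → ∃ e ∈ E, x ∈ e := reach_appears hreach
  have hnbr : ∀ x y : V, (∃ e ∈ Em, x ∈ e) → (∃ e ∈ Em, y ∈ e) →
      (Nbr Em x y ↔ Nbr E x y) := reach_nbr hreach
  have hconfEm : ConformalHG Em := reach_conformal hreach (conformal_of_acyclic hacyc)
  have hmh' : (maximalEdges E).card ≤ (maximalEdges Em).card := reach_mh hreach
  have hcardEm : 2 < Em.card :=
    lt_of_lt_of_le hmh (hmh'.trans (Finset.card_le_card (Finset.filter_subset _ _)))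
  have hanti : ∀ e ∈ Em, ∀ f ∈ Em, e ⊆ f → e = f := by
    intro e he f hf hsub
    by_contra hne
    exact hmax _ (ContractStep.atom Em e f he hf hne hsub)
  have halphaEm : ∀ S : Finset V, (∀ v ∈ S, ∃ e ∈ Em, v ∈ e) →
      (∀ a ∈ S, ∀ b ∈ S, a ≠ b → ¬ Nbr Em a b) → S.card < 3 := by
    intro S hSapp hSind
    apply halpha S (fun v hv => happ v (hSapp v hv))
    intro a ha b hb hab hN
    exact hSind a ha b hb hab ((hnbr a b (hSapp a ha) (hSapp b hb)).mpr hN)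
  have hC4E : NoC4 E := noC4_of_acyclic hacyc
  have hC4Em : NoC4 Em := by
    intro a b c d h1 h2 h3 h4 h5 h6
    have ha : ∃ e ∈ Em, a ∈ e := by obtain ⟨e, he, hx, -⟩ := h1; exact ⟨e, he, hx⟩
    have hb : ∃ e ∈ Em, b ∈ e := by obtain ⟨e, he, -, hy⟩ := h1; exact ⟨e, he, hy⟩
    have hc : ∃ e ∈ Em, c ∈ e := by obtain ⟨e, he, -, hy⟩ := h2; exact ⟨e, he, hy⟩
    have hd : ∃ e ∈ Em, d ∈ e := by obtain ⟨e, he, -, hy⟩ := h3; exact ⟨e, he, hy⟩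
    exact hC4E a b c d ((hnbr a b ha hb).mp h1) ((hnbr b c hb hc).mp h2)
      ((hnbr c d hc hd).mp h3) ((hnbr d a hd ha).mp h4)
      (fun h => h5 ((hnbr a c ha hc).mpr h)) (fun h => h6 ((hnbr b d hb hd).mpr h))
  have := key_lemma (Em.biUnion id).card Em le_rfl hanti hconfEm halphaEm hC4Em hP4
  omega
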